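/- Let K ⊆ A × B be a finite set with weights ρ : K → [0,1] summing to 1, and suppose the core-set condition max_{(a,b)∈A×B} φ(a,b)ᵀ (Σ_{(a',b')∈K} ρ(a',b')φ(a',b')φ(a',b')ᵀ)⁻¹ φ(a,b) ≤ 2d holds (with the matrix invertible). If θ̂ = θ* + (Σ_j ρ_j φ_j φ_jᵀ)⁻¹ Σ_j ρ_j φ_j z_j where |z_j| ≤ η for all j ∈ K, then max_{(a,b)∈A×B} |φ(a,b)ᵀ(θ̂ − θ*)| ≤ √(2d) · η. -/
import Mathlib


open Matrix

private lemma dot_sum_aux {ι n : Type*} [Fintype n] (s : Finset ι) (f : ι → n → ℝ)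
    (w : n → ℝ) : w ⬝ᵥ (∑ j ∈ s, f j) = ∑ j ∈ s, w ⬝ᵥ f j := by
  simp only [dotProduct, Finset.sum_apply, Finset.mul_sum]
  exact Finset.sum_comm

private lemma sum_mulVec_aux {ι n : Type*} [Fintype n] (s : Finset ι)
    (A : ι → Matrix n n ℝ) (w : n → ℝ) :
    (∑ j ∈ s, A j) *ᵥ w = ∑ j ∈ s, A j *ᵥ w := by
  ext i
  simp only [Matrix.mulVec, dotProduct, Matrix.sum_apply, Finset.sum_apply, Finset.sum_mul]
  exact Finset.sum_comm

theorem coreset_least_squares_error {A B : Type*} [Fintype A] [Fintype B] (d : ℕ)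
    (φ : A × B → Fin d → ℝ) (K : Finset (A × B)) (ρ z : A × B → ℝ)
    (θstar θhat : Fin d → ℝ) (η : ℝ) (hη : 0 ≤ η)
    (hρ0 : ∀ j ∈ K, 0 ≤ ρ j) (hρ1 : ∑ j ∈ K, ρ j = 1)
    (M : Matrix (Fin d) (Fin d) ℝ)
    (hM : M = ∑ j ∈ K, ρ j • Matrix.vecMulVec (φ j) (φ j))
    (hMunit : IsUnit M)
    (hcore : ∀ p : A × B, φ p ⬝ᵥ (M⁻¹ *ᵥ φ p) ≤ 2 * d)
    (hz : ∀ j ∈ K, |z j| ≤ η)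
    (hθ : θhat = θstar + M⁻¹ *ᵥ (∑ j ∈ K, (ρ j * z j) • φ j)) :
    ∀ p : A × B, |φ p ⬝ᵥ (θhat - θstar)| ≤ Real.sqrt (2 * d) * η := by
  intro p
  have hdet : IsUnit M.det := (Matrix.isUnit_iff_isUnit_det M).mp hMunit
  have hinv : M⁻¹ * M = 1 := Matrix.nonsing_inv_mul M hdet
  set w : Fin d → ℝ := φ p ᵥ* M⁻¹ with hw
  have hwM : w ᵥ* M = φ p := by
    rw [hw, Matrix.vecMul_vecMul, hinv, Matrix.vecMul_one]
  have h1 : φ p ⬝ᵥ (θhat - θstar) = ∑ j ∈ K, (ρ j * z j) * (w ⬝ᵥ φ j) := by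
    rw [hθ, add_sub_cancel_left, Matrix.dotProduct_mulVec, ← hw, dot_sum_aux]
    refine Finset.sum_congr rfl fun j hj => ?_
    rw [dotProduct_smul, smul_eq_mul]
  have h2 : ∑ j ∈ K, ρ j * (w ⬝ᵥ φ j) ^ 2 = w ⬝ᵥ φ p := by
    have key : w ⬝ᵥ (M *ᵥ w) = w ⬝ᵥ φ p := by
      rw [Matrix.dotProduct_mulVec, hwM, dotProduct_comm]
    rw [← key, hM, sum_mulVec_aux, dot_sum_aux]
    refine Finset.sum_congr rfl fun j hj => ?_
    rw [Matrix.smul_mulVec, dotProduct_smul, smul_eq_mul]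
    congr 1
    have hvv : Matrix.vecMulVec (φ j) (φ j) *ᵥ w = (φ j ⬝ᵥ w) • φ j := by
      ext i
      simp [Matrix.mulVec, Matrix.vecMulVec_apply, dotProduct, Finset.mul_sum,
        mul_comm, mul_assoc]
    rw [hvv, dotProduct_smul, smul_eq_mul, dotProduct_comm]
    ring
  have hwp : w ⬝ᵥ φ p ≤ 2 * d := by
    have := hcore p
    rwa [Matrix.dotProduct_mulVec, ← hw] at this
  -- Cauchy–Schwarz
  have hcs : (∑ j ∈ K, ρ j * |w ⬝ᵥ φ j|) ^ 2 ≤ ∑ j ∈ K, ρ j * (w ⬝ᵥ φ j) ^ 2 := by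
    have := Finset.sum_sq_le_sum_mul_sum_of_sq_eq_mul K
      (r := fun j => ρ j * |w ⬝ᵥ φ j|) (f := fun j => ρ j)
      (g := fun j => ρ j * (w ⬝ᵥ φ j) ^ 2)
      (fun j hj => hρ0 j hj)
      (fun j hj => mul_nonneg (hρ0 j hj) (sq_nonneg _))
      (fun j hj => by rw [mul_pow, sq_abs]; ring)
    rwa [hρ1, one_mul] at this
  have hsum_nonneg : (0:ℝ) ≤ ∑ j ∈ K, ρ j * (w ⬝ᵥ φ j) ^ 2 :=
    Finset.sum_nonneg fun j hj => mul_nonneg (hρ0 j hj) (sq_nonneg _)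
  have habs_nonneg : (0:ℝ) ≤ ∑ j ∈ K, ρ j * |w ⬝ᵥ φ j| :=
    Finset.sum_nonneg fun j hj => mul_nonneg (hρ0 j hj) (abs_nonneg _)
  have hkey : ∑ j ∈ K, ρ j * |w ⬝ᵥ φ j| ≤ Real.sqrt (2 * d) := by
    have h2d : (0:ℝ) ≤ 2 * d := by positivity
    rw [← Real.sqrt_sq habs_nonneg]
    exact Real.sqrt_le_sqrt (le_trans hcs (h2 ▸ hwp))
  rw [h1]
  calc |∑ j ∈ K, (ρ j * z j) * (w ⬝ᵥ φ j)|
      ≤ ∑ j ∈ K, |(ρ j * z j) * (w ⬝ᵥ φ j)| := Finset.abs_sum_le_sum_abs _ _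
    _ ≤ ∑ j ∈ K, (ρ j * |w ⬝ᵥ φ j|) * η := by
        refine Finset.sum_le_sum fun j hj => ?_
        rw [abs_mul, abs_mul, abs_of_nonneg (hρ0 j hj)]
        calc ρ j * |z j| * |w ⬝ᵥ φ j| ≤ ρ j * η * |w ⬝ᵥ φ j| := by
              have := hz j hj
              gcongr
              exact hρ0 j hj
          _ = (ρ j * |w ⬝ᵥ φ j|) * η := by ring
    _ = (∑ j ∈ K, ρ j * |w ⬝ᵥ φ j|) * η := by rw [Finset.sum_mul]
    _ ≤ Real.sqrt (2 * d) * η := by gcongr
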